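/- Let n ≥ 4 be an integer and N ≥ 40 · ln n an integer. Let Z_1, …, Z_N be {0,1}-valued random variables on a probability space such that for every k ∈ {1,…,N} and every event B in the σ-algebra generated by Z_1, …, Z_{k−1} with positive probability, the conditional probability P(Z_k = 1 | B) ≥ 1/2. Then P( Σ_{k=1}^{N} Z_k < 10 · ln n ) ≤ 1/(2n²). -/

import Mathlib

open MeasureTheory
open scoped ENNReal

/-- Probabilistic content of Lemma 9 of the paper: if each of `N ≥ 40·ln n`
rounds is "successful" (`Z k = 1`) with conditional probability at least `1/2`
given any positive-probability event `B` measurable with respect to the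
σ-algebra generated by the previous rounds, then fewer than `10·ln n`
successes occur with probability at most `1/(2n²)`. The conditional-probability
hypothesis is stated multiplicatively as `μ B / 2 ≤ μ ({Z k = 1} ∩ B)`. -/
theorem stmt18 {Ω : Type} [MeasurableSpace Ω] (μ : Measure Ω)
    [IsProbabilityMeasure μ]
    (n N : ℕ) (hn : 4 ≤ n) (hN : 40 * Real.log n ≤ N)
    (Z : Fin N → Ω → ℝ) (hZmeas : ∀ k, Measurable (Z k))
    (hZval : ∀ k ω, Z k ω = 0 ∨ Z k ω = 1)
    (hcond : ∀ k : Fin N, ∀ B : Set Ω,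
      MeasurableSet[⨆ j : {j : Fin N // j < k},
        MeasurableSpace.comap (Z j) inferInstance] B →
      0 < μ B → μ B / 2 ≤ μ ({ω | Z k ω = 1} ∩ B)) :
    μ {ω | ∑ k, Z k ω < 10 * Real.log n} ≤
      ENNReal.ofReal (1 / (2 * n ^ 2)) := by
  classical
  set m : ℝ := 10 * Real.log n with hm
  set mA : Fin N → MeasurableSpace Ω := fun k => ⨆ j : {j : Fin N // j < k},
      MeasurableSpace.comap (Z j) inferInstance with hmA
  set A : Fin N → Set Ω := fun k => {ω | Z k ω = 0} with hA
  set P : ℕ → Ω → ℝ≥0∞ := fun k ω =>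
      ∏ j ∈ Finset.univ.filter (fun j : Fin N => (j : ℕ) < k),
        (if Z j ω = 0 then 3 else 1) with hP
  have hA_meas : ∀ k, MeasurableSet (A k) := fun k =>
    hZmeas k (measurableSet_singleton 0)
  have hmA_le : ∀ k, mA k ≤ (inferInstance : MeasurableSpace Ω) := by
    intro k
    refine iSup_le fun j => ?_
    exact (hZmeas j).comap_le
  -- the conditional bound for zeros
  have hAB : ∀ k, ∀ B : Set Ω, MeasurableSet[mA k] B → μ (A k ∩ B) ≤ μ B / 2 := by
    intro k B hB
    rcases eq_or_lt_of_le (zero_le : 0 ≤ μ B) with h0 | h0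
    · have : μ (A k ∩ B) = 0 := le_antisymm
        (le_trans (measure_mono Set.inter_subset_right) h0.symm.le) (zero_le : (0:ℝ≥0∞) ≤ _)
      simp [this]
    · have hone := hcond k B hB h0
      have hBmeas : MeasurableSet B := hmA_le k B hB
      have hcompl : {ω | Z k ω = 1} ∩ B = B \ (A k ∩ B) := by
        ext ω
        rcases hZval k ω with h | h <;> simp [hA, h, and_comm] <;> norm_num [h]
      have hsub : A k ∩ B ⊆ B := Set.inter_subset_right
      have hmeasAB : MeasurableSet (A k ∩ B) := (hA_meas k).inter hBmeas
      have hsum : μ (A k ∩ B) + μ ({ω | Z k ω = 1} ∩ B) = μ B := by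
        rw [hcompl]
        have h2 := measure_inter_add_diff (μ := μ) B hmeasAB
        rwa [Set.inter_eq_right.mpr hsub] at h2
      have hle : μ (A k ∩ B) + μ B / 2 ≤ μ B / 2 + μ B / 2 := by
        calc μ (A k ∩ B) + μ B / 2
            ≤ μ (A k ∩ B) + μ ({ω | Z k ω = 1} ∩ B) := add_le_add_right hone _
          _ = μ B := hsum
          _ = μ B / 2 + μ B / 2 := (ENNReal.add_halves _).symm
      have htop : μ B / 2 ≠ ⊤ :=
        (ENNReal.div_lt_top (measure_ne_top μ B) (by norm_num)).ne
      exact (ENNReal.add_le_add_iff_right htop).mp hle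
  -- measurability of P k w.r.t. σ-algebras
  have hPmeas' : ∀ (k : ℕ) (K : Fin N), k ≤ (K : ℕ) → Measurable[mA K] (P k) := by
    intro k K hkK
    refine Finset.measurable_prod _ fun j hj => ?_
    simp only [Finset.mem_filter] at hj
    have hjK : j < K := Fin.lt_def.mpr (lt_of_lt_of_le hj.2 hkK)
    have hset : MeasurableSet[mA K] {ω | Z j ω = 0} := by
      have : MeasurableSet[MeasurableSpace.comap (Z j) inferInstance] {ω | Z j ω = 0} :=
        ⟨{0}, measurableSet_singleton 0, rfl⟩
      exact le_iSup (fun j : {j : Fin N // j < K} =>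
        MeasurableSpace.comap (Z (j : Fin N)) inferInstance) ⟨j, hjK⟩ _ this
    exact Measurable.ite hset measurable_const measurable_const
  have hPmeas : ∀ k : ℕ, Measurable (P k) := by
    intro k
    refine Finset.measurable_prod _ fun j hj => ?_
    exact Measurable.ite (hZmeas j (measurableSet_singleton 0)) measurable_const
      measurable_const
  -- induction: the exponential moment bound
  have hI : ∀ k : ℕ, k ≤ N → ∫⁻ ω, P k ω ∂μ ≤ 2 ^ k := by
    intro k
    induction k with
    | zero =>
      intro _
      have : P 0 = fun _ => 1 := by
        funext ω; simp [hP]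
      rw [this]
      simp
    | succ k ih =>
      intro hk
      have hkN : k < N := hk
      set K : Fin N := ⟨k, hkN⟩ with hK
      have hsplit : ∀ ω, P (k + 1) ω = P k ω + (A K).indicator (fun ω => 2 * P k ω) ω := by
        intro ω
        have hfs : Finset.univ.filter (fun j : Fin N => (j : ℕ) < k + 1)
            = insert K (Finset.univ.filter (fun j : Fin N => (j : ℕ) < k)) := by
          ext j
          simp only [Finset.mem_filter, Finset.mem_insert, Finset.mem_univ, true_and,
            Nat.lt_succ_iff_lt_or_eq]
          constructor
          · rintro (h | h)
            · exact Or.inr h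
            · exact Or.inl (Fin.ext h)
          · rintro (h | h)
            · exact Or.inr (by rw [h])
            · exact Or.inl h
        have hKnot : K ∉ Finset.univ.filter (fun j : Fin N => (j : ℕ) < k) := by
          simp [hK]
        rw [hP]
        simp only
        rw [hfs, Finset.prod_insert hKnot]
        by_cases hzA : Z K ω = 0
        · have : ω ∈ A K := hzA
          rw [Set.indicator_of_mem this, if_pos hzA]
          rw [show ((3:ℝ≥0∞)) = 1 + 2 by norm_num]
          ring
        · have : ω ∉ A K := hzA
          rw [Set.indicator_of_notMem this, if_neg hzA]
          ring
      -- the restricted integral bound via trim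
      have hrest : ∫⁻ ω in A K, P k ω ∂μ ≤ 2⁻¹ * ∫⁻ ω, P k ω ∂μ := by
        have hmle := hmA_le K
        have hPk : Measurable[mA K] (P k) := hPmeas' k K le_rfl
        have hν : (μ.restrict (A K)).trim hmle ≤ ((2:ℝ≥0∞)⁻¹ • μ).trim hmle := by
          rw [Measure.le_iff]
          intro s hs
          rw [trim_measurableSet_eq hmle hs, trim_measurableSet_eq hmle hs,
            Measure.restrict_apply (hmle s hs), Measure.smul_apply, smul_eq_mul,
            Set.inter_comm]
          calc μ (A K ∩ s) ≤ μ s / 2 := hAB K s hs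
            _ = 2⁻¹ * μ s := by rw [ENNReal.div_eq_inv_mul]
        calc ∫⁻ ω in A K, P k ω ∂μ
            = ∫⁻ ω, P k ω ∂((μ.restrict (A K)).trim hmle) := (lintegral_trim hmle hPk).symm
          _ ≤ ∫⁻ ω, P k ω ∂(((2:ℝ≥0∞)⁻¹ • μ).trim hmle) := lintegral_mono' hν le_rfl
          _ = 2⁻¹ * ∫⁻ ω, P k ω ∂μ := by
              rw [lintegral_trim hmle hPk, lintegral_smul_measure, smul_eq_mul]
      calc ∫⁻ ω, P (k + 1) ω ∂μ
          = ∫⁻ ω, (P k ω + (A K).indicator (fun ω => 2 * P k ω) ω) ∂μ := by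
            exact lintegral_congr hsplit
        _ = (∫⁻ ω, P k ω ∂μ) + ∫⁻ ω, (A K).indicator (fun ω => 2 * P k ω) ω ∂μ :=
            lintegral_add_left (hPmeas k) _
        _ = (∫⁻ ω, P k ω ∂μ) + 2 * ∫⁻ ω in A K, P k ω ∂μ := by
            rw [lintegral_indicator (hA_meas K), lintegral_const_mul 2 (hPmeas k)]
        _ ≤ (∫⁻ ω, P k ω ∂μ) + 2 * (2⁻¹ * ∫⁻ ω, P k ω ∂μ) := by
            gcongr
        _ = 2 * ∫⁻ ω, P k ω ∂μ := by
            rw [← mul_assoc, ENNReal.mul_inv_cancel (by norm_num) (by norm_num), one_mul,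
              two_mul]
        _ ≤ 2 * 2 ^ k := by
            gcongr
            exact ih hkN.le
        _ = 2 ^ (k + 1) := by ring
  -- pointwise bound on the bad set
  set c : ℝ≥0∞ := ENNReal.ofReal ((3:ℝ) ^ ((N : ℝ) - m)) with hc
  have hptwise : ∀ ω, (∑ k, Z k ω) < m → c ≤ P N ω := by
    intro ω hω
    set z := (Finset.univ.filter (fun j : Fin N => Z j ω = 0)).card with hz
    set o := (Finset.univ.filter (fun j : Fin N => Z j ω = 1)).card with ho
    have hzo : z + o = N := by
      have hco : Finset.univ.filter (fun j : Fin N => ¬ Z j ω = 0)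
          = Finset.univ.filter (fun j : Fin N => Z j ω = 1) := by
        apply Finset.filter_congr
        intro j _
        rcases hZval j ω with h | h <;> simp [h] <;> norm_num [h]
      have h := Finset.card_filter_add_card_filter_not
        (s := (Finset.univ : Finset (Fin N))) (p := fun j : Fin N => Z j ω = 0)
      rw [hco, Finset.card_univ, Fintype.card_fin] at h
      rw [hz, ho]
      exact h
    have hsum : (∑ k, Z k ω) = o := by
      rw [ho]
      rw [Finset.card_filter]
      push_cast
      refine Finset.sum_congr rfl fun j _ => ?_
      rcases hZval j ω with h | h <;> simp [h]
    have hPz : P N ω = (3:ℝ≥0∞) ^ z := by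
      rw [hP]
      simp only
      have : Finset.univ.filter (fun j : Fin N => (j : ℕ) < N) = Finset.univ := by
        ext j; simp [j.isLt]
      rw [this, Finset.prod_ite, Finset.prod_const, Finset.prod_const_one, mul_one, hz]
    rw [hPz]
    have h3 : (3:ℝ≥0∞) ^ z = ENNReal.ofReal ((3:ℝ) ^ z) := by
      rw [ENNReal.ofReal_pow (by norm_num)]
      norm_num
    rw [h3, hc]
    apply ENNReal.ofReal_le_ofReal
    rw [show ((3:ℝ) ^ z) = (3:ℝ) ^ ((z : ℕ) : ℝ) from (Real.rpow_natCast 3 z).symm]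
    apply Real.rpow_le_rpow_of_exponent_le (by norm_num)
    have : (o : ℝ) < m := hsum ▸ hω
    have hzN : (z : ℝ) = (N : ℝ) - o := by
      have := congrArg (fun t : ℕ => (t : ℝ)) hzo
      push_cast at this
      linarith
    linarith
  -- Markov inequality
  have hmarkov : c * μ {ω | ∑ k, Z k ω < m} ≤ 2 ^ N := by
    calc c * μ {ω | ∑ k, Z k ω < m} ≤ c * μ {ω | c ≤ P N ω} := by
          gcongr
          exact fun hω => hptwise _ hω
      _ ≤ ∫⁻ ω, P N ω ∂μ := mul_meas_ge_le_lintegral₀ (hPmeas N).aemeasurable c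
      _ ≤ 2 ^ N := hI N le_rfl
  have hc0 : c ≠ 0 := by
    rw [hc]
    simp only [ne_eq, ENNReal.ofReal_eq_zero, not_le]
    positivity
  have hctop : c ≠ ⊤ := ENNReal.ofReal_ne_top
  have hfinal : μ {ω | ∑ k, Z k ω < m} ≤ 2 ^ N / c := by
    rw [ENNReal.le_div_iff_mul_le (Or.inl hc0) (Or.inl hctop), mul_comm]
    exact hmarkov
  refine le_trans hfinal ?_
  -- the real arithmetic
  have hkey : (2:ℝ) ^ N / (3:ℝ) ^ ((N : ℝ) - m) ≤ 1 / (2 * (n:ℝ) ^ 2) := by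
    set l2 : ℝ := Real.log 2 with hl2def
    set l3 : ℝ := Real.log 3 with hl3def
    set L : ℝ := Real.log n with hLdef
    have hl2pos : (0.6931471803 : ℝ) < l2 := Real.log_two_gt_d9
    have h37 : 11 * l2 ≤ 7 * l3 := by
      have h1 : ((2:ℝ) ^ (11:ℕ)) ≤ 3 ^ (7:ℕ) := by norm_num
      have h2 := Real.log_le_log (by positivity) h1
      rw [Real.log_pow, Real.log_pow] at h2
      push_cast at h2
      linarith
    have hnR : (4:ℝ) ≤ (n:ℝ) := by exact_mod_cast hn
    have hnpos : (0:ℝ) < (n:ℝ) := by linarith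
    have hL4 : 2 * l2 ≤ L := by
      have h4 : Real.log 4 = 2 * l2 := by
        rw [show (4:ℝ) = 2 ^ (2:ℕ) by norm_num, Real.log_pow]
        push_cast; ring
      rw [← h4]
      exact Real.log_le_log (by norm_num) hnR
    have hNr : 40 * L ≤ (N:ℝ) := hN
    have e1 : (2:ℝ) ^ N = Real.exp (l2 * N) := by
      rw [← Real.rpow_natCast 2 N, Real.rpow_def_of_pos (by norm_num)]
    have e2 : (3:ℝ) ^ ((N:ℝ) - m) = Real.exp (l3 * ((N:ℝ) - m)) := by
      rw [Real.rpow_def_of_pos (by norm_num)]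
    have e3 : 1 / (2 * (n:ℝ) ^ 2) = Real.exp (-(l2 + 2 * L)) := by
      have hlog : Real.log (2 * (n:ℝ) ^ 2) = l2 + 2 * L := by
        rw [Real.log_mul (by norm_num) (by positivity), Real.log_pow]
        push_cast; ring
      rw [← hlog, Real.exp_neg, Real.exp_log (by positivity)]
      ring
    rw [e1, e2, e3, ← Real.exp_sub]
    apply Real.exp_le_exp.mpr
    rw [hm]
    have hl3l2 : l2 ≤ l3 := by nlinarith
    nlinarith [mul_nonneg (by linarith : (0:ℝ) ≤ (N:ℝ) - 40 * L) (by linarith : (0:ℝ) ≤ l3 - l2),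
      mul_nonneg (by linarith : (0:ℝ) ≤ L) (by linarith : (0:ℝ) ≤ 7 * l3 - 11 * l2),
      mul_nonneg (by linarith : (0:ℝ) ≤ L - 2 * l2) (by linarith : (0:ℝ) ≤ 50 * l2 - 14)]
  calc (2:ℝ≥0∞) ^ N / c
      = ENNReal.ofReal ((2:ℝ) ^ N) / ENNReal.ofReal ((3:ℝ) ^ ((N : ℝ) - m)) := by
        rw [hc, ENNReal.ofReal_pow (by norm_num)]
        norm_num
    _ = ENNReal.ofReal ((2:ℝ) ^ N / (3:ℝ) ^ ((N : ℝ) - m)) := by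
        rw [ENNReal.ofReal_div_of_pos]
        positivity
    _ ≤ ENNReal.ofReal (1 / (2 * (n:ℝ) ^ 2)) := ENNReal.ofReal_le_ofReal hkey
    _ = ENNReal.ofReal (1 / (2 * n ^ 2)) := by norm_num
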